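/- Let Λ_Y denote the integral lattice ℤ^16 equipped with the symmetric bilinear form whose Gram matrix is block diagonal with: three 2×2 blocks [[0,2],[2,0]], one 8×8 block equal to the negative of the Cartan matrix of E8, and two 1×1 blocks (−2). Let L_0 denote the first standard basis vector of the first 2×2 block, let L_1 denote the sum of the two standard basis vectors of the first 2×2 block, and let e_2 be any element of the E8 block of coordinates with (e_2, e_2) = −4 whose pairing with some standard basis vector of the E8 block is odd. Then L_0 and L_1 + e_2 are both primitive isotropic vectors, the divisibility of L_0 equals 2, the divisibility of L_1 + e_2 equals 1, and consequently there is no ℤ-linear automorphism g of Λ_Y preserving the bilinear form with g(L_0) = L_1 + e_2. -/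

import Mathlib

open Matrix

/-- A 6×6 matrix made of three 2×2 diagonal blocks `[[0,c],[c,0]]`
(the pairs of indices {0,1}, {2,3}, {4,5}). -/
def Ublock (c : ℤ) : Matrix (Fin 6) (Fin 6) ℤ :=
  fun i j => if i ≠ j ∧ i.val / 2 = j.val / 2 then c else 0

def eqY : (Fin 6 ⊕ Fin 8) ⊕ Fin 2 ≃ Fin 16 :=
  (Equiv.sumCongr finSumFinEquiv (Equiv.refl (Fin 2))).trans finSumFinEquiv

/-- Gram matrix of `Λ_Y = U(2)^3 ⊕ E8(-1) ⊕ ⟨-2⟩^2` on `ℤ^16`: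
coordinates 0–5 carry three blocks `[[0,2],[2,0]]`, coordinates 6–13 carry `-E₈`,
coordinates 14, 15 carry `(-2)` each. -/
def GramY : Matrix (Fin 16) (Fin 16) ℤ :=
  (Matrix.reindex eqY eqY)
    (Matrix.fromBlocks
      (Matrix.fromBlocks (Ublock 2) 0 0 (-CartanMatrix.E₈)) 0 0
      (Matrix.diagonal fun _ => -2))

def pairY (x y : Fin 16 → ℤ) : ℤ := x ⬝ᵥ (GramY *ᵥ y)

/-- `v` is primitive: it is not a multiple `n • w` with `n ≥ 2`. -/
def IsPrimitive (v : Fin 16 → ℤ) : Prop :=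
  ∀ n : ℤ, 2 ≤ n → ∀ w : Fin 16 → ℤ, v ≠ n • w

/-- `d` is the divisibility of `v`: the nonnegative generator of the ideal
`{(v,x) : x ∈ Λ_Y}`. -/
def HasDivisibility (v : Fin 16 → ℤ) (d : ℤ) : Prop :=
  0 ≤ d ∧ (∀ x : Fin 16 → ℤ, d ∣ pairY v x) ∧
    ∀ c : ℤ, (∀ x : Fin 16 → ℤ, c ∣ pairY v x) → c ∣ d

/-- The first standard basis vector of the first `U(2)` block. -/
def L0 : Fin 16 → ℤ := Pi.single 0 1

/-- The sum of the two standard basis vectors of the first `U(2)` block. -/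
def L1 : Fin 16 → ℤ := Pi.single 0 1 + Pi.single 1 1

lemma gram_row0 : ∀ j : Fin 16, GramY 0 j = if j = 1 then 2 else 0 := by decide
lemma gram_row1 : ∀ j : Fin 16, GramY 1 j = if j = 0 then 2 else 0 := by decide
lemma gram_col0 : ∀ i : Fin 16, GramY i 0 = if i = 1 then 2 else 0 := by decide
lemma gram_col1 : ∀ i : Fin 16, GramY i 1 = if i = 0 then 2 else 0 := by decide

lemma pairY_single0 (x : Fin 16 → ℤ) : pairY (Pi.single 0 1) x = 2 * x 1 := by
  unfold pairY
  rw [single_dotProduct, one_mul, Matrix.mulVec, dotProduct]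
  rw [Finset.sum_congr rfl fun j _ => by rw [gram_row0 j]]
  simp [ite_mul]

lemma pairY_single1 (x : Fin 16 → ℤ) : pairY (Pi.single 1 1) x = 2 * x 0 := by
  unfold pairY
  rw [single_dotProduct, one_mul, Matrix.mulVec, dotProduct]
  rw [Finset.sum_congr rfl fun j _ => by rw [gram_row1 j]]
  simp [ite_mul]

lemma pairY_single_right (x : Fin 16 → ℤ) (j : Fin 16) :
    pairY x (Pi.single j 1) = ∑ i, x i * GramY i j := by
  simp only [pairY, Matrix.mulVec_single, mul_one, MulOpposite.op_one, one_smul]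
  rfl

lemma pairY_add_left (x y z : Fin 16 → ℤ) : pairY (x + y) z = pairY x z + pairY y z := by
  simp [pairY, add_dotProduct]

lemma pairY_add_right (x y z : Fin 16 → ℤ) : pairY x (y + z) = pairY x y + pairY x z := by
  simp [pairY, Matrix.mulVec_add, dotProduct_add]

lemma pairY_L1 (x : Fin 16 → ℤ) : pairY L1 x = 2 * x 1 + 2 * x 0 := by
  rw [show L1 = Pi.single 0 1 + Pi.single 1 1 from rfl, pairY_add_left,
    pairY_single0, pairY_single1]

theorem stmt2 (e2 : Fin 16 → ℤ)
    (hsupp : ∀ i : Fin 16, (i.val < 6 ∨ 14 ≤ i.val) → e2 i = 0)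
    (hsq : pairY e2 e2 = -4)
    (hodd : ∃ j : Fin 16, 6 ≤ j.val ∧ j.val < 14 ∧ Odd (pairY e2 (Pi.single j 1))) :
    IsPrimitive L0 ∧ pairY L0 L0 = 0 ∧
    IsPrimitive (L1 + e2) ∧ pairY (L1 + e2) (L1 + e2) = 0 ∧
    HasDivisibility L0 2 ∧ HasDivisibility (L1 + e2) 1 ∧
    ¬ ∃ g : (Fin 16 → ℤ) ≃ₗ[ℤ] (Fin 16 → ℤ),
        (∀ x y : Fin 16 → ℤ, pairY (g x) (g y) = pairY x y) ∧ g L0 = L1 + e2 := by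
  have he0 : e2 0 = 0 := hsupp 0 (Or.inl (by norm_num))
  have he1 : e2 1 = 0 := hsupp 1 (Or.inl (by norm_num))
  -- pairings of e2 with the first two basis vectors vanish
  have heR0 : pairY e2 (Pi.single 0 1) = 0 := by
    rw [pairY_single_right, Finset.sum_congr rfl fun i _ => by rw [gram_col0 i]]
    simp [mul_ite, he1]
  have heR1 : pairY e2 (Pi.single 1 1) = 0 := by
    rw [pairY_single_right, Finset.sum_congr rfl fun i _ => by rw [gram_col1 i]]
    simp [mul_ite, he0]
  -- value of (L1 + e2) against a basis vector of the E8 block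
  have key : ∀ j : Fin 16, 6 ≤ j.val →
      pairY (L1 + e2) (Pi.single j 1) = pairY e2 (Pi.single j 1) := by
    intro j hj
    have hj0 : (j : Fin 16) ≠ 0 := Fin.ne_of_val_ne (by omega)
    have hj1 : (j : Fin 16) ≠ 1 := Fin.ne_of_val_ne (by omega)
    rw [pairY_add_left, pairY_L1, Pi.single_eq_of_ne hj1.symm, Pi.single_eq_of_ne hj0.symm]
    ring
  have hpair2 : pairY (L1 + e2) (Pi.single 1 1) = 2 := by
    rw [pairY_add_left, pairY_L1, heR1]
    simp
  refine ⟨?_, ?_, ?_, ?_, ?_, ?_, ?_⟩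
  · -- L0 primitive
    intro n hn w h
    have h0 : (1 : ℤ) = n * w 0 := by
      have := congrFun h 0
      simpa [L0, Pi.single_eq_same] using this
    have : n ∣ 1 := Dvd.intro _ h0.symm
    have := Int.le_of_dvd one_pos this
    omega
  · rw [show L0 = Pi.single 0 1 from rfl, pairY_single0]
    simp
  · -- L1 + e2 primitive
    intro n hn w h
    have h0 : (1 : ℤ) = n * w 0 := by
      have := congrFun h 0
      simpa [L1, Pi.single_eq_same, Pi.single_eq_of_ne (show (0:Fin 16) ≠ 1 by decide),
        he0] using this
    have : n ∣ 1 := Dvd.intro _ h0.symm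
    have := Int.le_of_dvd one_pos this
    omega
  · -- isotropic
    rw [pairY_add_left, pairY_add_right, pairY_add_right, pairY_L1, pairY_L1, hsq]
    have hL1 : pairY e2 L1 = 0 := by
      rw [show L1 = Pi.single 0 1 + Pi.single 1 1 from rfl, pairY_add_right, heR0, heR1]
      simp
    rw [hL1]
    simp [L1, Pi.single_eq_same, Pi.single_eq_of_ne (show (0:Fin 16) ≠ 1 by decide),
      Pi.single_eq_of_ne (show (1:Fin 16) ≠ 0 by decide), he0, he1]
  · -- divisibility of L0 is 2
    refine ⟨by norm_num, fun x => ?_, fun c hc => ?_⟩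
    · rw [show L0 = Pi.single 0 1 from rfl, pairY_single0]
      exact Dvd.intro _ rfl
    · have := hc (Pi.single 1 1)
      rwa [show L0 = Pi.single 0 1 from rfl, pairY_single0, Pi.single_eq_same, mul_one] at this
  · -- divisibility of L1 + e2 is 1
    refine ⟨zero_le_one, fun x => one_dvd _, fun c hc => ?_⟩
    obtain ⟨j, hj6, hj14, hjo⟩ := hodd
    have hc2 : c ∣ 2 := by
      have := hc (Pi.single 1 1)
      rwa [hpair2] at this
    have hcm : c ∣ pairY e2 (Pi.single j 1) := by
      have := hc (Pi.single j 1)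
      rwa [key j hj6] at this
    obtain ⟨k, hk⟩ := hjo
    have h2k : c ∣ 2 * k := Dvd.dvd.mul_right hc2 k
    have : c ∣ (2 * k + 1) - 2 * k := dvd_sub (hk ▸ hcm) h2k
    simpa using this
  · -- no isometry
    rintro ⟨g, hg, hgL0⟩
    obtain ⟨j, hj6, hj14, hjo⟩ := hodd
    have heven : (2 : ℤ) ∣ pairY (L1 + e2) (Pi.single j 1) := by
      have hx := hg L0 (g.symm (Pi.single j 1))
      rw [hgL0, g.apply_symm_apply] at hx
      rw [hx, show L0 = Pi.single 0 1 from rfl, pairY_single0]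
      exact Dvd.intro _ rfl
    rw [key j hj6] at heven
    obtain ⟨k, hk⟩ := hjo
    obtain ⟨t, ht⟩ := heven
    omega
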